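/- Let r_1 < r_2 be positive integers and let C be a linear [n,k,d]_q ((n_1,r_1),(n_2,r_2))-local code with n = n_1 + n_2, n_1 ≥ 1, n_2 ≥ 1, and assume r_1·⌈n_1/(r_1+1)⌉ < k − 1. Then d ≤ n − k + 2 − ⌈n_1/(r_1+1)⌉ − ⌈(k − r_1·⌈n_1/(r_1+1)⌉)/r_2⌉. -/

import Mathlib

open Finset

/-- `C` is a linear `[n,k,d]_q` code over `F`: it has `F`-dimension `k` and its minimum
Hamming distance (least Hamming weight of a nonzero codeword) equals `d`. -/
def IsLinearCode (F : Type*) [Field F] [DecidableEq F] {n : ℕ}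
    (C : Submodule F (Fin n → F)) (k d : ℕ) : Prop :=
  Module.finrank F C = k ∧
    (∀ c ∈ C, c ≠ 0 → d ≤ hammingNorm c) ∧
    ∃ c ∈ C, c ≠ 0 ∧ hammingNorm c = d

/-- Coordinate `i` of the code `C` has locality `r`. -/
def HasLocality (F : Type*) [Field F] {n : ℕ} (C : Submodule F (Fin n → F))
    (i : Fin n) (r : ℕ) : Prop :=
  ∃ R : Finset (Fin n), i ∉ R ∧ R.card ≤ r ∧
    ∃ lam : Fin n → F, ∀ c ∈ C, c i = ∑ j ∈ R, lam j * c j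

/-- Coordinate `i` of the code `C` has locality `r` with a repair set contained in `S`. -/
def HasLocalityIn (F : Type*) [Field F] {n : ℕ} (C : Submodule F (Fin n → F))
    (i : Fin n) (r : ℕ) (S : Finset (Fin n)) : Prop :=
  ∃ R : Finset (Fin n), R ⊆ S ∧ i ∉ R ∧ R.card ≤ r ∧
    ∃ lam : Fin n → F, ∀ c ∈ C, c i = ∑ j ∈ R, lam j * c j

/-- `H(I)`: the `F`-dimension of the image of `C` under the coordinate projection onto `I`. -/
noncomputable def projDim (F : Type*) [Field F] {n : ℕ}
    (C : Submodule F (Fin n → F)) (I : Finset (Fin n)) : ℕ :=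
  Module.finrank F (C.map (LinearMap.funLeft F F (fun i : {x // x ∈ I} => (i : Fin n))))

/-- `k_opt^{(q)}(n,d)`: the largest dimension of a linear code of length `n` over `F`
with minimum Hamming distance at least `d`. -/
noncomputable def kopt (F : Type*) [Field F] [DecidableEq F] (n d : ℕ) : ℕ :=
  sSup {k | ∃ C : Submodule F (Fin n → F), Module.finrank F C = k ∧
    ∀ c ∈ C, c ≠ 0 → d ≤ hammingNorm c}


section Aux

variable {F : Type*} [Field F] {n : ℕ} (C : Submodule F (Fin n → F))

/-- The subspace of codewords vanishing on `I`. -/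
noncomputable def Ksp (I : Finset (Fin n)) : Submodule F (Fin n → F) :=
  C ⊓ ⨅ i ∈ I, LinearMap.ker (LinearMap.proj (R := F) (φ := fun _ : Fin n => F) i)

lemma mem_Ksp {I : Finset (Fin n)} {x : Fin n → F} :
    x ∈ Ksp C I ↔ x ∈ C ∧ ∀ i ∈ I, x i = 0 := by
  simp [Ksp, Submodule.mem_inf, Submodule.mem_iInf, LinearMap.mem_ker]

/-- Dimension of the vanishing subspace. -/
noncomputable def rkK (I : Finset (Fin n)) : ℕ := Module.finrank F (Ksp C I)

lemma Ksp_insert_le (I : Finset (Fin n)) (i : Fin n) : Ksp C (insert i I) ≤ Ksp C I := by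
  intro x hx
  rw [mem_Ksp] at *
  exact ⟨hx.1, fun j hj => hx.2 j (Finset.mem_insert_of_mem hj)⟩

lemma rkK_le_insert (I : Finset (Fin n)) (i : Fin n) :
    rkK C I ≤ rkK C (insert i I) + 1 := by
  classical
  set p := Ksp C I with hp
  have hle : Ksp C (insert i I) ≤ p := Ksp_insert_le C I i
  let f : p →ₗ[F] F := (LinearMap.proj i).comp p.subtype
  have hker : LinearMap.ker f = Submodule.comap p.subtype (Ksp C (insert i I)) := by
    ext x
    have hx : (x : Fin n → F) ∈ C ∧ ∀ j ∈ I, (x : Fin n → F) j = 0 := (mem_Ksp C).mp x.2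
    simp only [f, LinearMap.mem_ker, Submodule.mem_comap, mem_Ksp, LinearMap.comp_apply,
      Submodule.subtype_apply, LinearMap.proj_apply]
    constructor
    · intro h
      refine ⟨hx.1, fun j hj => ?_⟩
      rcases Finset.mem_insert.mp hj with rfl | hj
      · exact h
      · exact hx.2 j hj
    · intro h
      exact h.2 i (Finset.mem_insert_self i I)
  have h1 : Module.finrank F (LinearMap.ker f) = rkK C (insert i I) := by
    rw [hker]
    exact LinearEquiv.finrank_eq (Submodule.comapSubtypeEquivOfLe hle)
  have h2 := LinearMap.finrank_range_add_finrank_ker f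
  have h3 : Module.finrank F (LinearMap.range f) ≤ 1 := by
    have := Submodule.finrank_le (LinearMap.range f)
    simpa [Module.finrank_self] using this
  have : rkK C I = Module.finrank F p := rfl
  omega

lemma rkK_insert_lt [FiniteDimensional F (Fin n → F)] {I : Finset (Fin n)} {c : Fin n → F}
    {i : Fin n} (hc : c ∈ Ksp C I) (hi : c i ≠ 0) :
    rkK C (insert i I) < rkK C I := by
  apply Submodule.finrank_lt_finrank_of_lt
  refine lt_of_le_of_ne (Ksp_insert_le C I i) fun h => hi ?_
  have : c ∈ Ksp C (insert i I) := h ▸ hc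
  exact ((mem_Ksp C).mp this).2 i (Finset.mem_insert_self i I)

lemma Ksp_insert_eq {I R : Finset (Fin n)} {i : Fin n} {lam : Fin n → F}
    (hR : R ⊆ I) (hloc : ∀ c ∈ C, c i = ∑ j ∈ R, lam j * c j) :
    Ksp C (insert i I) = Ksp C I := by
  refine le_antisymm (Ksp_insert_le C I i) fun x hx => ?_
  rw [mem_Ksp] at *
  refine ⟨hx.1, fun j hj => ?_⟩
  rcases Finset.mem_insert.mp hj with rfl | hj
  · rw [hloc x hx.1]
    exact Finset.sum_eq_zero fun j hj => by rw [hx.2 j (hR hj), mul_zero]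
  · exact hx.2 j hj

lemma nu_insert (I : Finset (Fin n)) (i : Fin n) :
    I.card + rkK C I ≤ (insert i I).card + rkK C (insert i I) := by
  by_cases h : i ∈ I
  · rw [Finset.insert_eq_self.mpr h]
  · rw [Finset.card_insert_of_notMem h]
    have := rkK_le_insert C I i
    omega

lemma nu_union (I R : Finset (Fin n)) :
    I.card + rkK C I ≤ (I ∪ R).card + rkK C (I ∪ R) := by
  classical
  induction R using Finset.induction_on with
  | empty => simp
  | insert _ _ _ ih =>
    exact le_trans ih (by rw [Finset.union_insert]; exact nu_insert C _ _)

lemma rk_union (I R : Finset (Fin n)) :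
    rkK C I ≤ rkK C (I ∪ R) + R.card := by
  classical
  induction R using Finset.induction_on with
  | empty => simp
  | @insert a R ha ih =>
    rw [Finset.union_insert, Finset.card_insert_of_notMem ha]
    have h2 := rkK_le_insert C (I ∪ R) a
    omega

lemma rkK_empty : rkK C ∅ = Module.finrank F C := by
  have : Ksp C ∅ = C := by
    ext x; simp [mem_Ksp]
  rw [rkK, this]

lemma step_lemma {I : Finset (Fin n)} {i : Fin n} {r : ℕ} (hiI : i ∉ I)
    (hloc : HasLocality F C i r) :
    ∃ I' : Finset (Fin n), I'.card ≤ I.card + r + 1 ∧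
      I.card + rkK C I + 1 ≤ I'.card + rkK C I' ∧
      rkK C I ≤ rkK C I' + r := by
  classical
  obtain ⟨R, hiR, hRcard, lam, hlam⟩ := hloc
  have hiIR : i ∉ I ∪ R := by simp [hiI, hiR]
  have hKeq : Ksp C (insert i (I ∪ R)) = Ksp C (I ∪ R) :=
    Ksp_insert_eq C (Finset.subset_union_right) hlam
  have hrkeq : rkK C (insert i (I ∪ R)) = rkK C (I ∪ R) := by rw [rkK, hKeq]; rfl
  have hcardeq : (insert i (I ∪ R)).card = (I ∪ R).card + 1 :=
    Finset.card_insert_of_notMem hiIR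
  have hcard1 : (I ∪ R).card ≤ I.card + R.card := Finset.card_union_le I R
  have hnu := nu_union C I R
  have hrk := rk_union C I R
  exact ⟨insert i (I ∪ R), by omega, by omega, by omega⟩

lemma exists_coord [FiniteDimensional F (Fin n → F)] {I : Finset (Fin n)}
    (h : 0 < rkK C I) :
    ∃ c ∈ Ksp C I, ∃ i : Fin n, c i ≠ 0 ∧ i ∉ I := by
  rw [rkK, Module.finrank_pos_iff] at h
  obtain ⟨x, hx⟩ := exists_ne (0 : ↥(Ksp C I))
  have hxv : (x : Fin n → F) ≠ 0 := fun hv => hx (Subtype.ext hv)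
  obtain ⟨i, hi⟩ := Function.ne_iff.mp hxv
  refine ⟨x, x.2, i, hi, fun hiI => hi ?_⟩
  exact ((mem_Ksp C).mp x.2).2 i hiI

end Aux

section Phases

variable {F : Type*} [Field F] {n : ℕ} (C : Submodule F (Fin n → F))

lemma phase1 (S₁ : Finset (Fin n)) (r₁ : ℕ) (hloc₁ : ∀ i ∈ S₁, HasLocality F C i r₁)
    (A : ℕ) (hA : ∀ j, j < A → j * (r₁ + 1) < S₁.card) :
    ∃ I : Finset (Fin n), I.card ≤ A * (r₁ + 1) ∧
      Module.finrank F C + A ≤ I.card + rkK C I ∧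
      Module.finrank F C ≤ rkK C I + A * r₁ := by
  induction A with
  | zero => exact ⟨∅, by simp, by simp [rkK_empty], by simp [rkK_empty]⟩
  | succ A ih =>
    obtain ⟨I, h1, h2, h3⟩ := ih (fun j hj => hA j (Nat.lt_succ_of_lt hj))
    have hIcard : I.card < S₁.card :=
      lt_of_le_of_lt h1 (hA A (Nat.lt_succ_self A))
    have hex : ∃ i ∈ S₁, i ∉ I := by
      by_contra h
      push_neg at h
      exact absurd (Finset.card_le_card h) (not_le.mpr hIcard)
    obtain ⟨i, hiS, hiI⟩ := hex
    obtain ⟨I', hc, hν, hrk⟩ := step_lemma C hiI (hloc₁ i hiS)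
    have e1 : (A + 1) * (r₁ + 1) = A * (r₁ + 1) + (r₁ + 1) := by ring
    have e2 : (A + 1) * r₁ = A * r₁ + r₁ := by ring
    exact ⟨I', by omega, by omega, by omega⟩

lemma phase2 (r₂ : ℕ) (hloc : ∀ i : Fin n, ∃ r ≤ r₂, HasLocality F C i r)
    (B' t₀ m₀ : ℕ) (hpos : t₀ + B' * r₂ < Module.finrank F C)
    (I₀ : Finset (Fin n)) (h₀ν : m₀ ≤ I₀.card + rkK C I₀)
    (h₀rk : Module.finrank F C ≤ rkK C I₀ + t₀) :
    ∃ I : Finset (Fin n), m₀ + B' ≤ I.card + rkK C I ∧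
      Module.finrank F C ≤ rkK C I + t₀ + B' * r₂ := by
  induction B' with
  | zero => exact ⟨I₀, by omega, by omega⟩
  | succ B' ih =>
    have e : (B' + 1) * r₂ = B' * r₂ + r₂ := by ring
    obtain ⟨I, h2, h3⟩ := ih (by omega)
    have hIpos : 0 < rkK C I := by omega
    obtain ⟨c, hc, i, hci, hiI⟩ := exists_coord C hIpos
    obtain ⟨r, hr, hlocr⟩ := hloc i
    obtain ⟨I', h1', hν', hrk'⟩ := step_lemma C hiI hlocr
    exact ⟨I', by omega, by omega⟩

end Phases

lemma phase3 {F : Type*} [Field F] {n : ℕ} (C : Submodule F (Fin n → F)) :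
    ∀ m (I : Finset (Fin n)), rkK C I = m → 0 < m →
    ∃ J : Finset (Fin n), rkK C J = 1 ∧ I.card + m ≤ J.card + 1 := by
  intro m
  induction m using Nat.strong_induction_on with
  | _ m ih =>
    intro I hm hpos
    rcases eq_or_lt_of_le (show 1 ≤ m from hpos) with h1 | h2
    · exact ⟨I, hm ▸ h1.symm, by omega⟩
    · obtain ⟨c, hc, i, hci, hiI⟩ := exists_coord C (hm ▸ hpos)
      have hlt : rkK C (insert i I) < m := hm ▸ rkK_insert_lt C hc hci
      have hge := rkK_le_insert C I i
      have hcard : (insert i I).card = I.card + 1 := Finset.card_insert_of_notMem hiI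
      obtain ⟨J, hJ1, hJ2⟩ := ih (rkK C (insert i I)) hlt (insert i I) rfl (by omega)
      exact ⟨J, hJ1, by omega⟩

lemma dist_bound {F : Type*} [Field F] [DecidableEq F] {n : ℕ} (C : Submodule F (Fin n → F))
    {d : ℕ} (hd : ∀ c ∈ C, c ≠ 0 → d ≤ hammingNorm c)
    {J : Finset (Fin n)} (h : 0 < rkK C J) : d + J.card ≤ n := by
  classical
  obtain ⟨c, hc, i, hci, hiJ⟩ := exists_coord C h
  have hcC : c ∈ C := ((mem_Ksp C).mp hc).1
  have hc0 : c ≠ 0 := by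
    intro h0
    exact hci (by rw [h0]; rfl)
  have hdc : d ≤ hammingNorm c := hd c hcC hc0
  have hsub : ({j | c j ≠ 0} : Finset (Fin n)) ⊆ Finset.univ \ J := by
    intro j hj
    simp only [Finset.mem_filter, Finset.mem_univ, true_and] at hj
    simp only [Finset.mem_sdiff, Finset.mem_univ, true_and]
    intro hjJ
    exact hj (((mem_Ksp C).mp hc).2 j hjJ)
  have hcard : ({j | c j ≠ 0} : Finset (Fin n)).card ≤ n - J.card := by
    calc ({j | c j ≠ 0} : Finset (Fin n)).card ≤ (Finset.univ \ J).card :=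
          Finset.card_le_card hsub
      _ = n - J.card := by rw [Finset.card_sdiff_of_subset (Finset.subset_univ J)]; simp
  have hJn : J.card ≤ n := by
    have := Finset.card_le_card (Finset.subset_univ J)
    simpa using this
  have : hammingNorm c ≤ n - J.card := hcard
  omega

theorem stmt1 {F : Type*} [Field F] [Fintype F] [DecidableEq F]
    {n n₁ n₂ k d r₁ r₂ : ℕ}
    (hr₁ : 0 < r₁) (hr : r₁ < r₂)
    (hn : n = n₁ + n₂) (hn₁ : 1 ≤ n₁) (hn₂ : 1 ≤ n₂)
    (C : Submodule F (Fin n → F)) (hC : IsLinearCode F C k d)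
    (S₁ S₂ : Finset (Fin n)) (hdisj : Disjoint S₁ S₂) (hcover : S₁ ∪ S₂ = Finset.univ)
    (hcard₁ : S₁.card = n₁) (hcard₂ : S₂.card = n₂)
    (hloc₁ : ∀ i ∈ S₁, HasLocality F C i r₁)
    (hloc₂ : ∀ i ∈ S₂, HasLocality F C i r₂)
    (hkr : (r₁ : ℤ) * ⌈(n₁ : ℚ) / ((r₁ : ℚ) + 1)⌉ < (k : ℤ) - 1) :
    (d : ℤ) ≤ (n : ℤ) - k + 2 - ⌈(n₁ : ℚ) / ((r₁ : ℚ) + 1)⌉ -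
      ⌈((k : ℚ) - (r₁ : ℚ) * (⌈(n₁ : ℚ) / ((r₁ : ℚ) + 1)⌉ : ℚ)) / (r₂ : ℚ)⌉ := by
  obtain ⟨hk, hd, -⟩ := hC
  set aZ := ⌈(n₁ : ℚ) / ((r₁ : ℚ) + 1)⌉ with haZ
  set bZ := ⌈((k : ℚ) - (r₁ : ℚ) * (aZ : ℚ)) / (r₂ : ℚ)⌉ with hbZ
  have hr₁Q : (0 : ℚ) < (r₁ : ℚ) + 1 := by positivity
  have hr₂Q : (0 : ℚ) < (r₂ : ℚ) := by
    have : 0 < r₂ := lt_trans hr₁ hr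
    exact_mod_cast this
  have haZpos : 0 < aZ := by
    rw [haZ, Int.ceil_pos]
    apply div_pos _ hr₁Q
    exact_mod_cast hn₁
  set A := aZ.toNat with hA'
  have hAeq : (A : ℤ) = aZ := Int.toNat_of_nonneg haZpos.le
  have hA1 : 1 ≤ A := by omega
  -- fact 1 : (A - 1) * (r₁ + 1) < n₁
  have f1Q : ((aZ : ℚ) - 1) * ((r₁ : ℚ) + 1) < n₁ := by
    have h := Int.ceil_lt_add_one ((n₁ : ℚ) / ((r₁ : ℚ) + 1))
    have h2 : (aZ : ℚ) - 1 < (n₁ : ℚ) / ((r₁ : ℚ) + 1) := by rw [haZ]; linarith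
    calc ((aZ : ℚ) - 1) * ((r₁ : ℚ) + 1)
        < ((n₁ : ℚ) / ((r₁ : ℚ) + 1)) * ((r₁ : ℚ) + 1) :=
          mul_lt_mul_of_pos_right h2 hr₁Q
      _ = n₁ := div_mul_cancel₀ _ (ne_of_gt hr₁Q)
  have f1 : (A - 1) * (r₁ + 1) < n₁ := by
    have hZ : ((A : ℤ) - 1) * ((r₁ : ℤ) + 1) < (n₁ : ℤ) := by
      rw [hAeq]; exact_mod_cast f1Q
    have hZ' : (((A - 1 : ℕ) : ℤ)) * ((r₁ : ℤ) + 1) < (n₁ : ℤ) := by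
      rwa [Nat.cast_sub hA1, Nat.cast_one]
    exact_mod_cast hZ'
  -- fact 2 : r₁ * A + 2 ≤ k
  have f2 : r₁ * A + 2 ≤ k := by
    have h : (r₁ : ℤ) * (A : ℤ) < (k : ℤ) - 1 := by rw [hAeq]; exact hkr
    have h' : ((r₁ * A : ℕ) : ℤ) + 2 ≤ (k : ℤ) := by push_cast; linarith
    exact_mod_cast h'
  -- b
  have hkrQ : (r₁ : ℚ) * (aZ : ℚ) < (k : ℚ) - 1 := by exact_mod_cast hkr
  have hbZpos : 0 < bZ := by
    rw [hbZ, Int.ceil_pos]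
    apply div_pos _ hr₂Q
    linarith
  set B := bZ.toNat with hB'
  have hBeq : (B : ℤ) = bZ := Int.toNat_of_nonneg hbZpos.le
  have hB1 : 1 ≤ B := by omega
  -- fact 3 : r₁ * A + r₂ * (B - 1) + 1 ≤ k
  have f3 : r₁ * A + r₂ * (B - 1) + 1 ≤ k := by
    have h := Int.ceil_lt_add_one (((k : ℚ) - (r₁ : ℚ) * (aZ : ℚ)) / (r₂ : ℚ))
    have h2 : (bZ : ℚ) - 1 < ((k : ℚ) - (r₁ : ℚ) * (aZ : ℚ)) / (r₂ : ℚ) := by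
      rw [hbZ]; linarith
    have h3 : ((bZ : ℚ) - 1) * (r₂ : ℚ) < (k : ℚ) - (r₁ : ℚ) * (aZ : ℚ) := by
      calc ((bZ : ℚ) - 1) * (r₂ : ℚ)
          < (((k : ℚ) - (r₁ : ℚ) * (aZ : ℚ)) / (r₂ : ℚ)) * (r₂ : ℚ) :=
            mul_lt_mul_of_pos_right h2 hr₂Q
        _ = (k : ℚ) - (r₁ : ℚ) * (aZ : ℚ) := div_mul_cancel₀ _ (ne_of_gt hr₂Q)
    have hZ : ((B : ℤ) - 1) * (r₂ : ℤ) < (k : ℤ) - (r₁ : ℤ) * (A : ℤ) := by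
      rw [hAeq, hBeq]; exact_mod_cast h3
    have hZ' : ((r₁ * A + r₂ * (B - 1) + 1 : ℕ) : ℤ) ≤ (k : ℤ) := by
      push_cast [Nat.cast_sub hB1]
      linarith
    exact_mod_cast hZ'
  -- combinatorial core
  have hfr : Module.finrank F C = k := hk
  have hA_feas : ∀ j, j < A → j * (r₁ + 1) < S₁.card := by
    intro j hj
    rw [hcard₁]
    calc j * (r₁ + 1) ≤ (A - 1) * (r₁ + 1) := Nat.mul_le_mul_right _ (by omega)
      _ < n₁ := f1
  obtain ⟨I₁, hI₁c, hI₁ν, hI₁rk⟩ := phase1 C S₁ r₁ hloc₁ A hA_feas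
  have hlocall : ∀ i : Fin n, ∃ r ≤ r₂, HasLocality F C i r := by
    intro i
    have : i ∈ S₁ ∪ S₂ := by rw [hcover]; exact Finset.mem_univ i
    rcases Finset.mem_union.mp this with h | h
    · exact ⟨r₁, le_of_lt hr, hloc₁ i h⟩
    · exact ⟨r₂, le_refl r₂, hloc₂ i h⟩
  have hpos2 : A * r₁ + (B - 1) * r₂ < Module.finrank F C := by
    rw [hfr]
    have : A * r₁ = r₁ * A := Nat.mul_comm _ _
    have : (B - 1) * r₂ = r₂ * (B - 1) := Nat.mul_comm _ _
    omega
  obtain ⟨I₂, hI₂ν, hI₂rk⟩ := phase2 C r₂ hlocall (B - 1) (A * r₁)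
    (Module.finrank F C + A) hpos2 I₁ hI₁ν hI₁rk
  have hI₂pos : 0 < rkK C I₂ := by
    rw [hfr] at hI₂rk
    omega
  obtain ⟨J, hJrk, hJcard⟩ := phase3 C (rkK C I₂) I₂ rfl hI₂pos
  have hdist : d + J.card ≤ n := dist_bound C hd (by rw [hJrk]; exact Nat.one_pos)
  -- J.card + 1 ≥ I₂.card + rkK C I₂ ≥ k + A + (B-1)
  rw [hfr] at hI₂ν
  have hfinal : d + k + A + B ≤ n + 2 := by omega
  rw [← hAeq, ← hBeq]
  have : ((d + k + A + B : ℕ) : ℤ) ≤ ((n + 2 : ℕ) : ℤ) := by exact_mod_cast hfinal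
  push_cast at this
  linarith
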